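/- Let o ∈ ℝ², r > 0, and let a, b be points on the circle of center o and radius r (dist(a, o) = dist(b, o) = r). Let s be a point strictly inside the circle (dist(s, o) < r), with s ≠ a and s ≠ b. Then the unoriented central angle satisfies ∠ a o b ≤ 2 · ∠ a s b, where ∠ x y z denotes the unoriented angle at vertex y between the rays toward x and z, taking values in [0, π]. -/

import Mathlib

open Real EuclideanGeometry
open scoped RealInnerProductSpace

noncomputable section

/-- The Euclidean plane ℝ². -/
abbrev Plane : Type := EuclideanSpace ℝ (Fin 2)

instance : Fact (Module.finrank ℝ Plane = 2) := ⟨finrank_euclideanSpace_fin⟩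

/-- The standard orientation of the plane. -/
def planeOrientation : Orientation ℝ Plane (Fin 2) :=
  (EuclideanSpace.basisFun (Fin 2) ℝ).toBasis.orientation

/-- The determinant `det(p, q)` of the 2×2 matrix with columns `p`, `q`. -/
def det2 (p q : Plane) : ℝ := p 0 * q 1 - p 1 * q 0

/-- A set of points is in general position if no three of its points are collinear. -/
def GeneralPosition (S : Set Plane) : Prop :=
  ∀ p ∈ S, ∀ q ∈ S, ∀ r ∈ S, p ≠ q → p ≠ r → q ≠ r →
    ¬ Collinear ℝ ({p, q, r} : Set Plane)

/-- `v : ZMod n → Plane` is a polygonization of `S`: a bijection from `ℤ/nℤ` onto `S`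
such that the closed segments `[v i, v (i+1)]` form a simple closed polygon:
consecutive segments meet exactly in their common endpoint, and non-consecutive
segments are disjoint. -/
def IsPolygonization (n : ℕ) (S : Set Plane) (v : ZMod n → Plane) : Prop :=
  Function.Injective v ∧ Set.range v = S ∧
  (∀ i : ZMod n,
    segment ℝ (v i) (v (i + 1)) ∩ segment ℝ (v (i + 1)) (v (i + 2)) = {v (i + 1)}) ∧
  (∀ i j : ZMod n, i ≠ j → i + 1 ≠ j → j + 1 ≠ i →
    Disjoint (segment ℝ (v i) (v (i + 1))) (segment ℝ (v j) (v (j + 1))))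

/-- A polygonization is counterclockwise if its signed area
`(1/2)·Σ_i det(v i, v (i+1))` is positive. -/
def Counterclockwise (n : ℕ) (v : ZMod n → Plane) : Prop :=
  0 < (1 / 2 : ℝ) * ∑ i ∈ Finset.range n, det2 (v (i : ZMod n)) (v ((i : ZMod n) + 1))

/-- The interior angle at vertex `v i` of a counterclockwise polygonization: the unique
real number in `(0, 2π)` congruent modulo `2π` to the oriented angle from
`v (i+1) - v i` to `v (i-1) - v i`. -/
def interiorAngle (n : ℕ) (v : ZMod n → Plane) (i : ZMod n) : ℝ :=
  let a := (planeOrientation.oangle (v (i + 1) - v i) (v (i - 1) - v i)).toReal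
  if 0 < a then a else a + 2 * π

/-- A point `p` of `S` is an extreme point of the convex hull of `S` if it does not lie
in the convex hull of the other points of `S`. -/
def IsExtremePt (S : Set Plane) (p : Plane) : Prop :=
  p ∈ S ∧ p ∉ convexHull ℝ (S \ {p})

/-- If `a` and `b` lie on the circle of center `o` and radius `r > 0`, and `s` lies strictly
inside the circle with `s ≠ a` and `s ≠ b`, then the central angle `∠ a o b` is at most
twice the angle `∠ a s b`. -/
theorem central_angle_le_two_mul_angle (o a b s : Plane) (r : ℝ) (hr : 0 < r)
    (ha : dist a o = r) (hb : dist b o = r) (hs : dist s o < r)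
    (hsa : s ≠ a) (hsb : s ≠ b) :
    EuclideanGeometry.angle a o b ≤ 2 * EuclideanGeometry.angle a s b := by
  haveI : Module.Oriented ℝ Plane (Fin 2) := ⟨planeOrientation⟩
  have hao : a ≠ o := by rintro rfl; rw [dist_self] at ha; linarith
  have hbo : b ≠ o := by rintro rfl; rw [dist_self] at hb; linarith
  by_cases hπ : π ≤ 2 * EuclideanGeometry.angle a s b
  · exact le_trans (EuclideanGeometry.angle_le_pi a o b) hπ
  push_neg at hπ
  rcases eq_or_ne a b with rfl | hab
  · rw [EuclideanGeometry.angle_self_of_ne hao]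
    have := EuclideanGeometry.angle_nonneg a s a
    linarith
  -- set up the sphere and the second intersection point
  set sph : EuclideanGeometry.Sphere Plane := ⟨o, r⟩ with hsph
  have ha' : a ∈ sph := ha
  have hb' : b ∈ sph := hb
  have hs' : dist s sph.center < sph.radius := hs
  set p : Plane := sph.secondInter a (s -ᵥ a) with hp
  have hsbtw : Sbtw ℝ a s p := EuclideanGeometry.Sphere.sbtw_secondInter ha' hs'
  have hp' : p ∈ sph := (EuclideanGeometry.Sphere.secondInter_mem _).2 ha'
  have hpa : p ≠ a := hsbtw.left_ne_right.symm
  have hpb : p ≠ b := by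
    rintro rfl
    have := hsbtw.angle₁₂₃_eq_pi
    have h2 := Real.pi_pos
    rw [this] at hπ; linarith
  have hps : p ≠ s := hsbtw.ne_right.symm
  -- the inscribed angle at p is at most the angle at s
  have hasp : EuclideanGeometry.angle a s p = π := hsbtw.angle₁₂₃_eq_pi
  have hsum : EuclideanGeometry.angle b s a + EuclideanGeometry.angle b s p = π :=
    EuclideanGeometry.angle_add_angle_eq_pi_of_angle_eq_pi b hasp
  have htri : EuclideanGeometry.angle s p b + EuclideanGeometry.angle p b s
      + EuclideanGeometry.angle b s p = π :=
    EuclideanGeometry.angle_add_angle_add_angle_eq_pi b hps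
  have hspb_le : EuclideanGeometry.angle s p b ≤ EuclideanGeometry.angle a s b := by
    have h1 := EuclideanGeometry.angle_nonneg p b s
    have h2 : EuclideanGeometry.angle b s a = EuclideanGeometry.angle a s b :=
      EuclideanGeometry.angle_comm b s a
    linarith
  -- ∠ a p b = ∠ s p b since s lies on segment from a to p
  have hapb_eq : EuclideanGeometry.angle a p b = EuclideanGeometry.angle s p b := by
    obtain ⟨⟨t, ⟨ht0, ht1⟩, hts⟩, hne1, hne2⟩ := hsbtw
    have hts' : s -ᵥ p = (1 - t) • (a -ᵥ p) := by
      rw [← hts]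
      simp only [AffineMap.lineMap_apply, vsub_eq_sub, vadd_eq_add]
      module
    have ht1' : t ≠ 1 := by
      rintro rfl
      simp [AffineMap.lineMap_apply] at hts
      exact hne2 hts.symm
    have hpos : 0 < 1 - t := lt_of_le_of_ne (by linarith) (by intro h; exact ht1' (by linarith))
    rw [EuclideanGeometry.angle, EuclideanGeometry.angle, hts',
      InnerProductGeometry.angle_smul_left_of_pos _ _ hpos]
  have hapb_le : EuclideanGeometry.angle a p b ≤ EuclideanGeometry.angle a s b := by
    rw [hapb_eq]; exact hspb_le
  have hapb_le' := hapb_le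
  -- inscribed angle theorem (oriented version)
  have hoangle : ∡ a sph.center b = (2 : ℤ) • ∡ a p b :=
    EuclideanGeometry.Sphere.oangle_center_eq_two_zsmul_oangle ha' hp' hb' hpa hpb
  have hcenter : sph.center = o := rfl
  rw [hcenter] at hoangle
  have haob : EuclideanGeometry.angle a o b = |(∡ a o b).toReal| :=
    EuclideanGeometry.angle_eq_abs_oangle_toReal hao hbo
  have hapb : EuclideanGeometry.angle a p b = |(∡ a p b).toReal| :=
    EuclideanGeometry.angle_eq_abs_oangle_toReal (Ne.symm hpa) (Ne.symm hpb)
  set θ : ℝ := (∡ a p b).toReal with hθ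
  have hθlt : |θ| < π / 2 := by
    rw [← hapb]
    calc EuclideanGeometry.angle a p b ≤ EuclideanGeometry.angle a s b := hapb_le
    _ < π / 2 := by linarith
  have h2θ : ((2 : ℤ) • ∡ a p b) = ((2 * θ : ℝ) : Real.Angle) := by
    rw [← Real.Angle.coe_toReal (∡ a p b), ← hθ]
    rw [two_zsmul, ← Real.Angle.coe_add]
    norm_num [two_mul]
  have h2θtoReal : (((2 * θ : ℝ) : Real.Angle)).toReal = 2 * θ := by
    rw [Real.Angle.toReal_coe_eq_self_iff]
    rcases abs_lt.1 hθlt with ⟨h1, h2⟩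
    constructor <;> [linarith; linarith]
  rw [haob, hoangle, h2θ, h2θtoReal, abs_mul, abs_two]
  linarith [hapb_le]
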